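/- Let δ ≥ 3 and n ≥ 2δ² be integers. Then ρ(K_δ ∨ (K_{n−δ(δ−1)−1} ∪ (δ(δ−2)+1)K_1)) > n − δ(δ−2) − 2. -/

import Mathlib

open Finset

/-- The spectral radius of a finite simple graph: the largest eigenvalue of its
adjacency matrix (over `ℝ`). -/
noncomputable def specRad {V : Type*} [Fintype V] (G : SimpleGraph V) : ℝ :=
  letI := Classical.decEq V
  letI := Classical.decRel G.Adj
  sSup (spectrum ℝ (G.adjMatrix ℝ))

/-- `joinCliques s t f` is the graph `K_s ∨ (K_{f 0} ∪ K_{f 1} ∪ ⋯ ∪ K_{f (t-1)})`. -/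
def joinCliques (s t : ℕ) (f : Fin t → ℕ) :
    SimpleGraph (Fin s ⊕ (Σ i : Fin t, Fin (f i))) where
  Adj x y := x ≠ y ∧ ∀ a b, x = Sum.inr a → y = Sum.inr b → a.1 = b.1
  symm := ⟨fun _x _y h => ⟨h.1.symm, fun a b hy hx => (h.2 b a hx hy).symm⟩⟩
  loopless := ⟨fun _x h => h.1 rfl⟩

/-- `gJoin s m t p` is the graph `K_s ∨ (K_m ∪ t·K_p)`. -/
def gJoin (s m t p : ℕ) :=
  joinCliques s (t + 1) (Fin.cons m fun _ => p)

section RayleighAux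

open scoped RealInnerProductSpace

lemma rayleigh0 {V : Type*} [Fintype V] [DecidableEq V]
    {A : Matrix V V ℝ} (hA : A.IsHermitian) (x : EuclideanSpace ℝ V) (hx : x ≠ 0) :
    ⟪Matrix.toEuclideanLin A x, x⟫ / ‖x‖ ^ 2 ≤ sSup (spectrum ℝ A) := by
  have hV : Nonempty V := by
    by_contra h
    simp only [not_nonempty_iff] at h
    exact hx (Subsingleton.elim _ _)
  haveI : Nontrivial (EuclideanSpace ℝ V) := nontrivial_of_ne x 0 hx
  set T := Matrix.toEuclideanLin A with hT
  have hsym : T.IsSymmetric := Matrix.isHermitian_iff_isSymmetric.mp hA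
  set T' := LinearMap.toContinuousLinearMap T with hT'
  have hbdd : BddAbove (Set.range fun y : {y : EuclideanSpace ℝ V // y ≠ 0} =>
      RCLike.re ⟪T y, (y : EuclideanSpace ℝ V)⟫ / ‖(y : EuclideanSpace ℝ V)‖ ^ 2) := by
    refine ⟨‖T'‖, ?_⟩
    rintro r ⟨⟨y, hy⟩, rfl⟩
    have hy0 : (0:ℝ) < ‖y‖ := norm_pos_iff.mpr hy
    have hny : (0:ℝ) < ‖y‖ ^ 2 := by positivity
    rw [div_le_iff₀ hny]
    calc RCLike.re ⟪T y, y⟫ ≤ ‖T y‖ * ‖y‖ := by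
          simpa using real_inner_le_norm (T y) y
      _ ≤ ‖T'‖ * ‖y‖ * ‖y‖ := by
          have h1 : ‖T y‖ ≤ ‖T'‖ * ‖y‖ := T'.le_opNorm y
          nlinarith [norm_nonneg (T y), hy0]
      _ = ‖T'‖ * ‖y‖ ^ 2 := by ring
  have hev := hsym.hasEigenvalue_iSup_of_finiteDimensional
  set μ := (⨆ y : {y : EuclideanSpace ℝ V // y ≠ 0},
      RCLike.re ⟪T y, (y : EuclideanSpace ℝ V)⟫ / ‖(y : EuclideanSpace ℝ V)‖ ^ 2 : ℝ) with hμdef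
  have hμmem : μ ∈ spectrum ℝ A := by
    rw [← Matrix.spectrum_toEuclideanLin (A := A) (𝕜 := ℝ)]
    exact hev.mem_spectrum
  have h1 : ⟪T x, x⟫ / ‖x‖ ^ 2 ≤ μ := by
    have := le_ciSup hbdd ⟨x, hx⟩
    rw [hμdef]
    simpa using this
  exact h1.trans (le_csSup (A.finite_spectrum.bddAbove) hμmem)

lemma rayleigh_le_sSup_spectrum {V : Type*} [Fintype V] [DecidableEq V]
    {A : Matrix V V ℝ} (hA : A.IsHermitian) (x : V → ℝ) (hx : x ≠ 0) :
    (∑ u, (∑ v, A u v * x v) * x u) / (∑ u, x u * x u) ≤ sSup (spectrum ℝ A) := by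
  let y : EuclideanSpace ℝ V := WithLp.toLp 2 x
  have hy : y ≠ 0 := by simpa [y] using hx
  have h1 : ⟪Matrix.toEuclideanLin A y, y⟫ = ∑ u, (∑ v, A u v * x v) * x u := by
    rw [PiLp.inner_apply]
    simp only [RCLike.inner_apply, conj_trivial]
    refine Finset.sum_congr rfl fun u _ => ?_
    have hTu : (Matrix.toEuclideanLin A y) u = ∑ v, A u v * x v := by
      rw [Matrix.toEuclideanLin_apply]
      simp [y, Matrix.mulVec,
        dotProduct]
    rw [hTu]
    exact mul_comm _ _
  have h2 : ‖y‖ ^ 2 = ∑ u, x u * x u := by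
    rw [← real_inner_self_eq_norm_sq, PiLp.inner_apply]
    simp [RCLike.inner_apply, y, sq]
  rw [← h1, ← h2]
  exact rayleigh0 hA y hy

end RayleighAux

namespace Stmt9Aux

variable (s m t : ℕ)

abbrev P := Σ i : Fin (t+1), Fin ((Fin.cons m fun _ => 1 : Fin (t+1) → ℕ) i)
abbrev W := Fin s ⊕ P m t

def Xp (c : ℝ) : P m t → ℝ := fun p => if p.1 = 0 then 1 else c

def X (c : ℝ) : W s m t → ℝ := Sum.elim (fun _ => 1) (Xp m t c)

def bv : W s m t → W s m t → ℝ := fun u v =>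
  Sum.elim (fun _ => 0)
    (fun p => Sum.elim (fun _ => 0) (fun q => if p.1 = q.1 then 0 else 1) v) u

lemma sum_P (g : Fin (t+1) → ℝ) :
    ∑ p : P m t, g p.1 = (m : ℝ) * g 0 + ∑ i : Fin t, g i.succ := by
  rw [← Finset.univ_sigma_univ, Finset.sum_sigma, Fin.sum_univ_succ]
  simp [Fin.cons_zero, Fin.cons_succ, mul_comm]

lemma sum_Xp (c : ℝ) : ∑ p : P m t, Xp m t c p = m + t * c := by
  have := sum_P m t (fun i => if i = 0 then (1:ℝ) else c)
  simp only [Xp]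
  rw [this]
  simp [Fin.succ_ne_zero, mul_comm]

lemma sum_Xp_sq (c : ℝ) : ∑ p : P m t, Xp m t c p * Xp m t c p = m + t * (c * c) := by
  have := sum_P m t (fun i => (if i = 0 then (1:ℝ) else c) * (if i = 0 then (1:ℝ) else c))
  simp only [Xp]
  rw [this]
  simp [Fin.succ_ne_zero, mul_comm]

lemma sum_X (c : ℝ) : ∑ w, X s m t c w = s + (m + t * c) := by
  rw [Fintype.sum_sum_type]
  simp [X, sum_Xp]

lemma sum_X_sq (c : ℝ) :
    ∑ w, X s m t c w * X s m t c w = s + (m + t * (c * c)) := by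
  rw [Fintype.sum_sum_type]
  simp [X, sum_Xp_sq]

lemma adj_iff (u v : W s m t) :
    (gJoin s m t 1).Adj u v ↔
      u ≠ v ∧ ∀ a b, u = Sum.inr a → v = Sum.inr b → a.1 = b.1 := Iff.rfl

lemma adj_ite (u v : W s m t) [Decidable ((gJoin s m t 1).Adj u v)]
    [DecidableEq (W s m t)] :
    (if (gJoin s m t 1).Adj u v then (1:ℝ) else 0)
      = 1 - (if u = v then 1 else 0) - bv s m t u v := by
  rcases u with a | p <;> rcases v with b | q
  · by_cases hab : a = b
    · subst hab
      rw [if_neg (by simp [adj_iff]), if_pos rfl]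
      simp [bv]
    · rw [if_pos, if_neg (by simp [hab])]
      · simp [bv]
      · exact ⟨by simp [hab], by simp⟩
  · rw [if_pos ⟨by simp, by simp⟩, if_neg (by simp)]
    simp [bv]
  · rw [if_pos ⟨by simp, by simp⟩, if_neg (by simp)]
    simp [bv]
  · by_cases h1 : p.1 = q.1
    · by_cases hpq : p = q
      · subst hpq
        rw [if_neg (by simp [adj_iff]), if_pos rfl]
        simp [bv, h1]
      · rw [if_pos, if_neg (by simp [hpq])]
        · simp [bv, h1]
        · refine ⟨by simp [hpq], ?_⟩
          rintro a b ha hb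
          obtain rfl : p = a := by simpa using ha
          obtain rfl : q = b := by simpa using hb
          exact h1
    · rw [if_neg, if_neg]
      · simp [bv, h1]
      · simp
        rintro rfl
        exact h1 rfl
      · rw [adj_iff]
        rintro ⟨-, h⟩
        exact h1 (h p q rfl rfl)

lemma sum_bv (c : ℝ) :
    ∑ u, ∑ v, bv s m t u v * (X s m t c v * X s m t c u)
      = (m + t * c) ^ 2 - ((m:ℝ) * m + t * (c * c)) := by
  classical
  rw [Fintype.sum_sum_type]
  have h0 : ∀ a : Fin s, ∑ v, bv s m t (Sum.inl a) v * (X s m t c v * X s m t c (Sum.inl a)) = 0 := by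
    intro a; simp [bv]
  simp only [h0, Finset.sum_const_zero, zero_add]
  have h1 : ∀ p : P m t,
      ∑ v, bv s m t (Sum.inr p) v * (X s m t c v * X s m t c (Sum.inr p))
        = ∑ q : P m t, (if p.1 = q.1 then 0 else 1) * (Xp m t c q * Xp m t c p) := by
    intro p
    rw [Fintype.sum_sum_type]
    simp [bv, X]
  simp only [h1]
  have h2 : ∀ p : P m t,
      ∑ q : P m t, (if p.1 = q.1 then (0:ℝ) else 1) * (Xp m t c q * Xp m t c p)
        = (∑ q : P m t, Xp m t c q) * Xp m t c p
          - ∑ q : P m t, (if p.1 = q.1 then (1:ℝ) else 0) * (Xp m t c q * Xp m t c p) := by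
    intro p
    rw [eq_sub_iff_add_eq, ← Finset.sum_add_distrib, Finset.sum_mul]
    refine Finset.sum_congr rfl fun q _ => ?_
    by_cases h : p.1 = q.1 <;> simp [h]
  simp only [h2]
  rw [Finset.sum_sub_distrib]
  have h3 : ∑ p : P m t, (∑ q : P m t, Xp m t c q) * Xp m t c p = (m + t * c) ^ 2 := by
    rw [← Finset.mul_sum, sum_Xp, sq]
  have h4 : ∀ p : P m t,
      ∑ q : P m t, (if p.1 = q.1 then (1:ℝ) else 0) * (Xp m t c q * Xp m t c p)
        = ((Fin.cons m fun _ => 1 : Fin (t+1) → ℕ) p.1 : ℝ)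
            * ((if p.1 = 0 then (1:ℝ) else c) * Xp m t c p) := by
    intro p
    rw [← Finset.univ_sigma_univ, Finset.sum_sigma]
    have : ∀ i : Fin (t+1), ∑ j : Fin ((Fin.cons m fun _ => 1 : Fin (t+1) → ℕ) i),
        (if p.1 = i then (1:ℝ) else 0) * (Xp m t c ⟨i, j⟩ * Xp m t c p)
        = if p.1 = i then ((Fin.cons m fun _ => 1 : Fin (t+1) → ℕ) i : ℝ)
            * ((if i = 0 then (1:ℝ) else c) * Xp m t c p) else 0 := by
      intro i
      simp only [Xp]
      by_cases h : p.1 = i <;>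
        simp [h, Finset.sum_const, Finset.card_univ, nsmul_eq_mul, mul_assoc]
    simp only [this]
    simp
  simp only [h4]
  have h5 : ∑ p : P m t, ((Fin.cons m fun _ => 1 : Fin (t+1) → ℕ) p.1 : ℝ)
            * ((if p.1 = 0 then (1:ℝ) else c) * Xp m t c p)
      = (m:ℝ) * m + t * (c * c) := by
    have := sum_P m t (fun i => ((Fin.cons m fun _ => 1 : Fin (t+1) → ℕ) i : ℝ)
            * ((if i = 0 then (1:ℝ) else c) * (if i = 0 then (1:ℝ) else c)))
    rw [show (fun p : P m t => ((Fin.cons m fun _ => 1 : Fin (t+1) → ℕ) p.1 : ℝ)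
            * ((if p.1 = 0 then (1:ℝ) else c) * Xp m t c p))
        = (fun p : P m t => ((Fin.cons m fun _ => 1 : Fin (t+1) → ℕ) p.1 : ℝ)
            * ((if p.1 = 0 then (1:ℝ) else c) * (if p.1 = 0 then (1:ℝ) else c))) from rfl]
    rw [this]
    simp [Fin.succ_ne_zero, Fin.cons_zero, Fin.cons_succ, mul_comm]
  rw [h3, h5]

lemma quad (c : ℝ) [DecidableRel (gJoin s m t 1).Adj] :
    ∑ u, ∑ v, (if (gJoin s m t 1).Adj u v then (1:ℝ) else 0) * (X s m t c v * X s m t c u)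
      = ((s:ℝ) + m) * ((s + m) - 1) + 2 * s * t * c := by
  classical
  have key : ∀ u, ∑ v, (if (gJoin s m t 1).Adj u v then (1:ℝ) else 0) * (X s m t c v * X s m t c u)
      = (∑ w, X s m t c w) * X s m t c u - X s m t c u * X s m t c u
        - ∑ v, bv s m t u v * (X s m t c v * X s m t c u) := by
    intro u
    have hpt : ∀ v, (if (gJoin s m t 1).Adj u v then (1:ℝ) else 0) * (X s m t c v * X s m t c u)
        = X s m t c v * X s m t c u
          - (if u = v then (1:ℝ) else 0) * (X s m t c v * X s m t c u)
          - bv s m t u v * (X s m t c v * X s m t c u) := by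
      intro v
      rw [adj_ite]
      ring
    simp only [hpt]
    rw [Finset.sum_sub_distrib, Finset.sum_sub_distrib, ← Finset.sum_mul]
    congr 1
    congr 1
    simp [ite_mul]
  simp only [key]
  rw [Finset.sum_sub_distrib, Finset.sum_sub_distrib, ← Finset.mul_sum, sum_bv, sum_X, sum_X_sq]
  ring

lemma quad' (c : ℝ) [DecidableRel (gJoin s m t 1).Adj] :
    ∑ u, (∑ v, (if (gJoin s m t 1).Adj u v then (1:ℝ) else 0) * X s m t c v) * X s m t c u
      = ((s:ℝ) + m) * ((s + m) - 1) + 2 * s * t * c := by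
  rw [← quad s m t c]
  refine Finset.sum_congr rfl fun u _ => ?_
  rw [Finset.sum_mul]
  exact Finset.sum_congr rfl fun v _ => (mul_assoc _ _ _)

end Stmt9Aux

/-- Let `δ ≥ 3` and `n ≥ 2δ²` be integers.  Then
`ρ(K_δ ∨ (K_{n−δ(δ−1)−1} ∪ (δ(δ−2)+1)K_1)) > n − δ(δ−2) − 2`. -/
theorem stmt_9 (δ n : ℕ) (hδ : 3 ≤ δ) (hn : 2 * δ ^ 2 ≤ n) :
    (n : ℝ) - (δ : ℝ) * ((δ : ℝ) - 2) - 2 <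
      specRad (gJoin δ (n - δ * (δ - 1) - 1) (δ * (δ - 2) + 1) 1) := by
  classical
  obtain ⟨k, rfl⟩ : ∃ k, δ = k + 3 := ⟨δ - 3, by omega⟩
  set m : ℕ := n - (k + 3) * ((k + 3) - 1) - 1 with hm
  set t : ℕ := (k + 3) * ((k + 3) - 2) + 1 with ht
  -- basic numeric facts
  have hmn : (k + 3) * (k + 2) + 1 ≤ n := by nlinarith [hn]
  have hmR : (m : ℝ) = (n : ℝ) - ((k:ℝ) + 3) * ((k:ℝ) + 2) - 1 := by
    have : m = n - ((k + 3) * (k + 2) + 1) := by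
      rw [hm, show (k+3) - 1 = k + 2 from rfl, Nat.sub_sub]
    rw [this, Nat.cast_sub hmn]
    push_cast
    ring
  have htR : (t : ℝ) = ((k:ℝ) + 3) * ((k:ℝ) + 1) + 1 := by
    have : t = (k + 3) * (k + 1) + 1 := by
      rw [ht]
      congr 1
    rw [this]
    push_cast
    ring
  have hnR : 2 * ((k:ℝ) + 3) ^ 2 ≤ (n : ℝ) := by exact_mod_cast hn
  -- the vector
  set N : ℝ := ((k:ℝ) + 3) + (m : ℝ) with hN
  have hmbig : (11 : ℝ) ≤ (m : ℝ) := by nlinarith [hmR, hnR]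
  have hN1 : (0 : ℝ) < N - 1 := by rw [hN]; nlinarith
  set c : ℝ := ((k:ℝ) + 3) / (N - 1) with hc
  have hcpos : 0 < c := by positivity
  have hcmul : c * (N - 1) = (k:ℝ) + 3 := div_mul_cancel₀ _ (ne_of_gt hN1)
  have hxne : Stmt9Aux.X (k+3) m t c ≠ 0 := by
    intro h
    have := congrFun h (Sum.inl ⟨0, by omega⟩)
    simp [Stmt9Aux.X] at this
  unfold specRad
  have hAh : ((gJoin (k+3) m t 1).adjMatrix ℝ).IsHermitian := by
    unfold Matrix.IsHermitian
    ext u v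
    simp [Matrix.conjTranspose_apply, SimpleGraph.adjMatrix_apply,
      SimpleGraph.adj_comm]
  refine lt_of_lt_of_le ?_
    (@rayleigh_le_sSup_spectrum _ _ (Classical.decEq _) _ hAh
      (Stmt9Aux.X (k+3) m t c) hxne)
  have hδR : ((k + 3 : ℕ) : ℝ) = (k:ℝ) + 3 := by push_cast; ring
  simp only [SimpleGraph.adjMatrix_apply]
  rw [Stmt9Aux.quad', Stmt9Aux.sum_X_sq]
  rw [hδR]
  have hsN : ((k:ℝ)+3) + (m:ℝ) = N := hN.symm
  rw [hsN]
  have htpos : (0:ℝ) < (t:ℝ) := by rw [htR]; nlinarith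
  have htarget : (n : ℝ) - ((k:ℝ)+3) * (((k:ℝ)+3) - 2) - 2 = N - 1 := by
    rw [hN, hmR]; ring
  have hD : (0:ℝ) < ((k:ℝ)+3) + ((m:ℝ) + (t:ℝ) * (c * c)) := by
    have h1 : (0:ℝ) ≤ (t:ℝ) * (c * c) := by positivity
    nlinarith
  rw [htarget, lt_div_iff₀ hD]
  have key : (N - 1) * ((t:ℝ) * (c * c)) < 2 * ((k:ℝ)+3) * (t:ℝ) * c := by
    have h1 : (N - 1) * ((t:ℝ) * (c * c)) = ((t:ℝ) * c) * (c * (N - 1)) := by ring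
    rw [h1, hcmul]
    have htc : (0:ℝ) < (t:ℝ) * c := mul_pos htpos hcpos
    nlinarith [mul_pos (show (0:ℝ) < (k:ℝ)+3 by positivity) htc]
  have hEq : ((k:ℝ)+3) + ((m:ℝ) + (t:ℝ) * (c * c)) = N + (t:ℝ) * (c * c) := by
    rw [← hsN]; ring
  rw [hEq]
  nlinarith [key]
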